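/- For the ℤ_p-tower over the bouquet B_k with all voltages equal to the topological generator γ, and u = v_p(k), for all n ≥ u the p-part of the Jacobian satisfies #𝒥(X_n)[p^∞] = p^{u·pⁿ + n − u}; in particular the size has the Iwasawa-type form p^{λpⁿ + μn + ν} with λ = u, μ = 1, ν = −u. -/

import Mathlib

noncomputable def degMap (V : Type) [Fintype V] : (V → ℤ) →ₗ[ℤ] ℤ where
  toFun f := ∑ v, f v
  map_add' f g := by simp [Finset.sum_add_distrib]
  map_smul' c f := by simp [Finset.mul_sum]

noncomputable def bd {E V : Type} [Fintype E] [DecidableEq V]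
    (o t : E → V) : (E → ℤ) →ₗ[ℤ] (V → ℤ) where
  toFun f v := ∑ e, f e * ((if t e = v then 1 else 0) - (if o e = v then 1 else 0))
  map_add' f g := by
    funext v; simp [add_mul, Finset.sum_add_distrib]
  map_smul' c f := by
    funext v; simp [Finset.mul_sum, mul_assoc]

noncomputable def starMap {E V : Type} (o t : E → V) : (V → ℤ) →ₗ[ℤ] (E → ℤ) where
  toFun f e := f (t e) - f (o e)
  map_add' f g := by funext e; simp; ring
  map_smul' c f := by funext e; simp; ring

/-- The Jacobian of a graph: degree-zero divisors modulo principal divisors. -/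
noncomputable abbrev Jacobian {E V : Type} [Fintype E] [Fintype V] [DecidableEq V]
    (o t : E → V) :=
  ↥(LinearMap.ker (degMap V)) ⧸
    Submodule.comap (LinearMap.ker (degMap V)).subtype
      (LinearMap.range (bd o t ∘ₗ starMap o t))

namespace JP

open Finset

noncomputable def A (m : ℕ) [NeZero m] (D : ZMod m → ℤ) : ℤ := ∑ v : ZMod m, (v.val : ℤ) * D v

noncomputable def S (m : ℕ) (D : ZMod m → ℤ) (j : ℕ) : ℤ :=
  ∑ t ∈ Finset.range (j + 1), ((j : ℤ) + 1 - (t : ℤ)) * D ((t : ℕ) : ZMod m)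

lemma S_add {m : ℕ} (D E : ZMod m → ℤ) (j : ℕ) :
    S m (D + E) j = S m D j + S m E j := by
  simp [S, Pi.add_apply, mul_add, Finset.sum_add_distrib]

lemma A_add {m : ℕ} [NeZero m] (D E : ZMod m → ℤ) :
    A m (D + E) = A m D + A m E := by
  simp [A, Pi.add_apply, mul_add, Finset.sum_add_distrib]

noncomputable def FF (m k : ℕ) [NeZero m] :
    (ZMod m → ℤ) →+ (Fin (m - 2) → ZMod k) × ZMod (k * m) :=
  AddMonoidHom.mk' (fun D =>
    (fun i => ((((i.val : ℤ) + 2) * D 0 - S m D (i.val + 1) : ℤ) : ZMod k),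
      ((A m D + (m : ℤ) * D 0 : ℤ) : ZMod (k * m))))
  (by
    intro D E
    refine Prod.ext ?_ ?_
    · funext i
      simp only [S_add, A_add, Pi.add_apply, Prod.fst_add]
      push_cast
      ring
    · simp only [S_add, A_add, Pi.add_apply, Prod.snd_add]
      push_cast
      ring)

noncomputable def Lmap (m k : ℕ) [NeZero m] : (ZMod m → ℤ) →ₗ[ℤ] (ZMod m → ℤ) :=
  bd (fun e : ZMod m × Fin k => e.1) (fun e => e.1 + 1) ∘ₗ
    starMap (fun e : ZMod m × Fin k => e.1) (fun e => e.1 + 1)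

variable {m k : ℕ}

lemma natCast_sub_one (hm : 1 ≤ m) : ((m - 1 : ℕ) : ZMod m) = -1 := by
  have : ((m : ℕ) : ZMod m) = 0 := ZMod.natCast_self m
  rw [Nat.cast_sub hm, this]; ring

lemma val_neg_one' [NeZero m] (hm : 2 ≤ m) : (-1 : ZMod m).val = m - 1 := by
  rw [← natCast_sub_one (by omega)]
  exact ZMod.val_cast_of_lt (by omega)

lemma val_pos_of_ne_zero [NeZero m] {v : ZMod m} (hv : v ≠ 0) : 1 ≤ v.val := by
  rcases Nat.eq_zero_or_pos v.val with h | h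
  · exact absurd ((ZMod.val_eq_zero v).1 h) hv
  · exact h

lemma val_sub_one [NeZero m] (hm : 2 ≤ m) (v : ZMod m) (hv : v ≠ 0) :
    (v - 1).val = v.val - 1 := by
  have h1 : 1 ≤ v.val := val_pos_of_ne_zero hv
  have h2 : v - 1 = ((v.val - 1 : ℕ) : ZMod m) := by
    have hv' : ((v.val : ℕ) : ZMod m) = v := ZMod.natCast_rightInverse v
    rw [Nat.cast_sub h1, hv', Nat.cast_one]
  rw [h2, ZMod.val_cast_of_lt (by have := ZMod.val_lt v; omega)]

lemma eq_neg_one_of_val [NeZero m] (hm : 2 ≤ m) {v : ZMod m} (h : v.val = m - 1) :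
    v = -1 := by
  have hv' : ((v.val : ℕ) : ZMod m) = v := ZMod.natCast_rightInverse v
  rw [← hv', h, natCast_sub_one (by omega)]

lemma neg_one_ne_zero' [NeZero m] (hm : 2 ≤ m) : (-1 : ZMod m) ≠ 0 := by
  intro h
  have := val_neg_one' (m := m) hm
  rw [h, ZMod.val_zero] at this
  omega

lemma sum_zmod [NeZero m] {α : Type*} [AddCommMonoid α] (g : ZMod m → α) :
    ∑ v : ZMod m, g v = ∑ j ∈ Finset.range m, g ((j : ℕ) : ZMod m) := by
  refine Finset.sum_nbij' (fun v => v.val) (fun j => ((j : ℕ) : ZMod m)) ?_ ?_ ?_ ?_ ?_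
  · intro v _; exact Finset.mem_range.2 (ZMod.val_lt v)
  · intro j _; exact Finset.mem_univ _
  · intro v _; exact ZMod.natCast_rightInverse v
  · intro j hj; exact ZMod.val_cast_of_lt (Finset.mem_range.1 hj)
  · intro v _; rw [ZMod.natCast_rightInverse v]

lemma val_add_one [NeZero m] (hm : 2 ≤ m) (v : ZMod m) :
    (v + 1).val = if v.val + 1 = m then 0 else v.val + 1 := by
  haveI : Fact (1 < m) := ⟨hm⟩
  rw [ZMod.val_add, ZMod.val_one]
  by_cases h : v.val + 1 = m
  · simp [h]
  · have := ZMod.val_lt v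
    rw [if_neg h, Nat.mod_eq_of_lt (by omega)]

lemma L_apply [NeZero m] (f : ZMod m → ℤ) (v : ZMod m) :
    Lmap m k f v = k * (2 * f v - f (v - 1) - f (v + 1)) := by
  show (∑ e : ZMod m × Fin k, (f (e.1 + 1) - f e.1) *
      ((if e.1 + 1 = v then (1:ℤ) else 0) - (if e.1 = v then 1 else 0))) = _
  rw [Fintype.sum_prod_type]
  dsimp +instances only
  simp only [Finset.sum_const, Finset.card_univ, Fintype.card_fin, nsmul_eq_mul]
  rw [← Finset.mul_sum]
  congr 1
  have h1 : ∀ w : ZMod m, (if w + 1 = v then (1:ℤ) else 0) = if w = v - 1 then 1 else 0 := by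
    intro w; simp [eq_sub_iff_add_eq]
  calc ∑ w : ZMod m, (f (w + 1) - f w) *
        ((if w + 1 = v then (1:ℤ) else 0) - (if w = v then 1 else 0))
      = ∑ w : ZMod m, ((f (w + 1) - f w) * (if w = v - 1 then (1:ℤ) else 0)
          - (f (w + 1) - f w) * (if w = v then 1 else 0)) := by
        refine Finset.sum_congr rfl fun w _ => ?_
        rw [h1 w]; ring
    _ = (f (v - 1 + 1) - f (v - 1)) - (f (v + 1) - f v) := by
        rw [Finset.sum_sub_distrib]
        simp [mul_ite, Finset.sum_ite_eq']
    _ = 2 * f v - f (v - 1) - f (v + 1) := by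
        rw [sub_add_cancel]; ring


lemma A_L [NeZero m] (hm : 2 ≤ m) (f : ZMod m → ℤ) :
    A m (Lmap m k f) + m * (Lmap m k f 0) = k * m * (f 0 - f 1) := by
  have hW : ∀ v : ZMod m, (2 * (v.val : ℤ) - ((v + 1).val : ℤ) - ((v - 1).val : ℤ))
      = m * ((if v = -1 then 1 else 0) - (if v = 0 then 1 else 0)) := by
    intro v
    by_cases h0 : v = 0
    · subst h0
      rw [if_neg (Ne.symm (neg_one_ne_zero' hm)), zero_add, zero_sub, val_neg_one' hm,
        ZMod.val_zero]
      haveI : Fact (1 < m) := ⟨hm⟩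
      rw [ZMod.val_one]
      push_cast [Nat.cast_sub (by omega : 1 ≤ m)]
      simp
      ring
    · by_cases h1 : v = -1
      · subst h1
        rw [if_pos rfl, if_neg (neg_one_ne_zero' hm), neg_add_cancel, ZMod.val_zero,
          val_sub_one hm _ (neg_one_ne_zero' hm), val_neg_one' hm]
        push_cast [Nat.cast_sub (by omega : 1 ≤ m - 1), Nat.cast_sub (by omega : 1 ≤ m)]
        ring
      · rw [if_neg h1, if_neg h0]
        have hlt : v.val + 1 ≠ m := by
          intro h
          exact h1 (eq_neg_one_of_val hm (by omega))
        rw [val_add_one hm, if_neg hlt, val_sub_one hm _ h0]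
        have h2 : 1 ≤ v.val := val_pos_of_ne_zero h0
        push_cast [Nat.cast_sub h2]
        ring
  have hre1 : ∑ v : ZMod m, (v.val : ℤ) * f (v - 1) = ∑ v : ZMod m, ((v + 1).val : ℤ) * f v := by
    refine Fintype.sum_equiv (Equiv.subRight (1 : ZMod m)) _ _ ?_
    intro x
    simp
  have hre2 : ∑ v : ZMod m, (v.val : ℤ) * f (v + 1) = ∑ v : ZMod m, ((v - 1).val : ℤ) * f v := by
    refine Fintype.sum_equiv (Equiv.addRight (1 : ZMod m)) _ _ ?_
    intro x
    simp
  have e1 : ∑ v : ZMod m, (v.val : ℤ) * ((k : ℤ) * f (v - 1))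
      = ∑ v : ZMod m, ((v + 1).val : ℤ) * ((k : ℤ) * f v) := by
    refine Fintype.sum_equiv (Equiv.subRight (1 : ZMod m)) _ _ ?_
    intro x
    simp
  have e2 : ∑ v : ZMod m, (v.val : ℤ) * ((k : ℤ) * f (v + 1))
      = ∑ v : ZMod m, ((v - 1).val : ℤ) * ((k : ℤ) * f v) := by
    refine Fintype.sum_equiv (Equiv.addRight (1 : ZMod m)) _ _ ?_
    intro x
    simp
  have hA : A m (Lmap m k f) = k * ∑ v : ZMod m,
      (2 * (v.val : ℤ) - ((v + 1).val : ℤ) - ((v - 1).val : ℤ)) * f v := by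
    calc A m (Lmap m k f)
        = ∑ v : ZMod m, (v.val : ℤ) * ((k : ℤ) * (2 * f v - f (v - 1) - f (v + 1))) := by
          refine Finset.sum_congr rfl fun v _ => ?_
          rw [L_apply]
      _ = ∑ v : ZMod m, (2 * ((v.val : ℤ) * ((k : ℤ) * f v))
            - (v.val : ℤ) * ((k : ℤ) * f (v - 1)) - (v.val : ℤ) * ((k : ℤ) * f (v + 1))) := by
          refine Finset.sum_congr rfl fun v _ => ?_
          ring
      _ = ∑ v : ZMod m, 2 * ((v.val : ℤ) * ((k : ℤ) * f v))
            - ∑ v : ZMod m, (v.val : ℤ) * ((k : ℤ) * f (v - 1))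
            - ∑ v : ZMod m, (v.val : ℤ) * ((k : ℤ) * f (v + 1)) := by
          rw [Finset.sum_sub_distrib, Finset.sum_sub_distrib]
      _ = ∑ v : ZMod m, 2 * ((v.val : ℤ) * ((k : ℤ) * f v))
            - ∑ v : ZMod m, ((v + 1).val : ℤ) * ((k : ℤ) * f v)
            - ∑ v : ZMod m, ((v - 1).val : ℤ) * ((k : ℤ) * f v) := by
          rw [e1, e2]
      _ = ∑ v : ZMod m, (2 * ((v.val : ℤ) * ((k : ℤ) * f v))
            - ((v + 1).val : ℤ) * ((k : ℤ) * f v) - ((v - 1).val : ℤ) * ((k : ℤ) * f v)) := by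
          rw [Finset.sum_sub_distrib, Finset.sum_sub_distrib]
      _ = k * ∑ v : ZMod m,
            (2 * (v.val : ℤ) - ((v + 1).val : ℤ) - ((v - 1).val : ℤ)) * f v := by
          rw [Finset.mul_sum]
          refine Finset.sum_congr rfl fun v _ => ?_
          ring
  have hsumW : ∑ v : ZMod m,
      (2 * (v.val : ℤ) - ((v + 1).val : ℤ) - ((v - 1).val : ℤ)) * f v
      = m * (f (-1) - f 0) := by
    calc ∑ v : ZMod m, (2 * (v.val : ℤ) - ((v + 1).val : ℤ) - ((v - 1).val : ℤ)) * f v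
        = ∑ v : ZMod m, ((m : ℤ) * ((if v = -1 then 1 else 0) - (if v = 0 then 1 else 0))) * f v := by
          refine Finset.sum_congr rfl fun v _ => ?_
          rw [hW v]
      _ = ∑ v : ZMod m, ((m : ℤ) * ((if v = -1 then f v else 0) - (if v = 0 then f v else 0))) := by
          refine Finset.sum_congr rfl fun v _ => ?_
          by_cases h : v = -1
          · subst h
            rw [if_pos rfl, if_pos rfl, if_neg (neg_one_ne_zero' hm), if_neg (neg_one_ne_zero' hm)]
            ring
          · by_cases h' : v = 0
            · subst h'
              rw [if_neg h, if_neg h, if_pos rfl, if_pos rfl]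
              ring
            · rw [if_neg h, if_neg h, if_neg h', if_neg h']
              ring
      _ = m * (f (-1) - f 0) := by
          rw [← Finset.mul_sum]
          congr 1
          rw [Finset.sum_sub_distrib]
          simp [Finset.sum_ite_eq']
  rw [hA, hsumW, L_apply]
  have : (0 : ZMod m) - 1 = -1 := by ring
  rw [this]
  ring


lemma FF_apply [NeZero m] (D : ZMod m → ℤ) :
    FF m k D = (fun i => ((((i.val : ℤ) + 2) * D 0 - S m D (i.val + 1) : ℤ) : ZMod k),
      ((A m D + (m : ℤ) * D 0 : ℤ) : ZMod (k * m))) := rfl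

lemma S_zero [NeZero m] (D : ZMod m → ℤ) : S m D 0 = D 0 := by
  simp [S]

lemma S_succ [NeZero m] (D : ZMod m → ℤ) (j : ℕ) :
    S m D (j + 1) = S m D j + ∑ t ∈ Finset.range (j + 2), D ((t : ℕ) : ZMod m) := by
  have h1 : S m D (j + 1)
      = ∑ t ∈ Finset.range (j + 2), ((((j : ℤ) + 1 - t) + 1) * D ((t : ℕ) : ZMod m)) := by
    unfold S
    refine Finset.sum_congr rfl fun t ht => ?_
    push_cast
    ring
  rw [h1]
  have h2 : ∀ t ∈ Finset.range (j + 2),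
      (((j : ℤ) + 1 - t) + 1) * D ((t : ℕ) : ZMod m)
      = ((j : ℤ) + 1 - t) * D ((t : ℕ) : ZMod m) + D ((t : ℕ) : ZMod m) := by
    intro t ht; ring
  rw [Finset.sum_congr rfl h2, Finset.sum_add_distrib]
  congr 1
  have h3 : ((j : ℤ) + 1 - ((j + 1 : ℕ) : ℤ)) = 0 := by push_cast; ring
  rw [show j + 2 = (j + 1) + 1 from rfl, Finset.sum_range_succ, h3, zero_mul, add_zero]
  rfl

lemma FL_zero [NeZero m] (hm : 2 ≤ m) (f : ZMod m → ℤ) :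
    FF m k (Lmap m k f) = 0 := by
  have hdvdL : ∀ v, (k : ℤ) ∣ Lmap m k f v := by
    intro v; rw [L_apply]; exact Dvd.intro _ rfl
  rw [FF_apply]
  refine Prod.ext ?_ ?_
  · funext i
    show ((((i.val : ℤ) + 2) * (Lmap m k f) 0 - S m (Lmap m k f) (i.val + 1) : ℤ) : ZMod k)
        = (0 : ZMod k)
    rw [ZMod.intCast_zmod_eq_zero_iff_dvd _ k]
    exact dvd_sub ((hdvdL 0).mul_left _) (Finset.dvd_sum fun t _ => (hdvdL _).mul_left _)
  · show ((A m (Lmap m k f) + (m : ℤ) * (Lmap m k f) 0 : ℤ) : ZMod (k * m))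
        = (0 : ZMod (k * m))
    rw [ZMod.intCast_zmod_eq_zero_iff_dvd _ (k * m), A_L hm]
    push_cast
    exact Dvd.intro _ rfl

lemma ker_L [NeZero m] (hm : 2 ≤ m) (hk : 1 ≤ k) (D : ZMod m → ℤ)
    (hsum : ∑ v : ZMod m, D v = 0) (h0 : FF m k D = 0) : ∃ f, Lmap m k f = D := by
  have hkz : (k : ℤ) ≠ 0 := by exact_mod_cast (by omega : k ≠ 0)
  have hmz : (m : ℤ) ≠ 0 := by exact_mod_cast (by omega : m ≠ 0)
  rw [FF_apply] at h0
  have hFi : ∀ i : Fin (m - 2), (k : ℤ) ∣ ((i.val : ℤ) + 2) * D 0 - S m D (i.val + 1) := by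
    intro i
    have h1 := congrFun (congrArg Prod.fst h0) i
    rw [show (0 : (Fin (m - 2) → ZMod k) × ZMod (k * m)).1 i = 0 from rfl] at h1
    exact (ZMod.intCast_zmod_eq_zero_iff_dvd _ k).1 h1
  have hlast : ((k : ℤ) * m) ∣ A m D + m * D 0 := by
    have h1 := congrArg Prod.snd h0
    rw [show (0 : (Fin (m - 2) → ZMod k) × ZMod (k * m)).2 = 0 from rfl] at h1
    have := (ZMod.intCast_zmod_eq_zero_iff_dvd _ (k * m)).1 h1
    push_cast at this
    exact this
  have hσ : ∀ i : ℕ, i ≤ m - 2 → (k : ℤ) ∣ ((i : ℤ) + 1) * D 0 - S m D i := by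
    intro i hi2
    rcases Nat.eq_zero_or_pos i with rfl | hi1
    · rw [S_zero]
      simp
    · have hi : i - 1 < m - 2 := by omega
      have h2 := hFi ⟨i - 1, hi⟩
      have e1 : (((i : ℕ) - 1 : ℕ) : ℤ) + 2 = (i : ℤ) + 1 := by omega
      have e2 : (i - 1) + 1 = i := by omega
      simpa [e1, e2] using h2
  have hmid : ∀ i : ℕ, 1 ≤ i → i ≤ m - 2 → (k : ℤ) ∣ D ((i : ℕ) : ZMod m) := by
    intro i h1 h2
    rcases Nat.lt_or_ge i 2 with hc | hc
    · have hi1 : i = 1 := by omega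
      subst hi1
      have hS1 : S m D 1 = D 0 + ∑ t ∈ Finset.range 2, D ((t : ℕ) : ZMod m) := by
        have := S_succ D 0
        rwa [S_zero] at this
      have hS1' : S m D 1 = 2 * D 0 + D ((1 : ℕ) : ZMod m) := by
        rw [hS1, Finset.sum_range_succ, Finset.sum_range_one]
        push_cast
        ring
      have := hσ 1 h2
      rw [hS1'] at this
      have h3 : ((1 : ℕ) : ℤ) + 1 = 2 := by norm_num
      rw [h3] at this
      have h4 : (2 : ℤ) * D 0 - (2 * D 0 + D ((1 : ℕ) : ZMod m)) = -(D ((1 : ℕ) : ZMod m)) := by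
        ring
      rw [h4] at this
      exact (dvd_neg).1 this
    · obtain ⟨j, rfl⟩ : ∃ j, i = j + 2 := ⟨i - 2, by omega⟩
      have r1 := S_succ D (j + 1)
      have r2 := S_succ D j
      have r3 : ∑ t ∈ Finset.range (j + 3), D ((t : ℕ) : ZMod m)
          = ∑ t ∈ Finset.range (j + 2), D ((t : ℕ) : ZMod m) + D (((j + 2 : ℕ)) : ZMod m) := by
        rw [show j + 3 = (j + 2) + 1 from rfl, Finset.sum_range_succ]
      have key : D (((j + 2 : ℕ)) : ZMod m)
          = -((((j + 2 : ℕ) : ℤ) + 1) * D 0 - S m D (j + 2))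
            + 2 * ((((j + 1 : ℕ) : ℤ) + 1) * D 0 - S m D (j + 1))
            - (((j : ℤ) + 1) * D 0 - S m D j) := by
        have e12 : j + 1 + 1 = j + 2 := rfl
        rw [e12] at r1
        push_cast
        push_cast at r1 r2 r3
        linarith [r1, r2, r3]
      rw [key]
      exact dvd_sub (dvd_add ((hσ (j + 2) h2).neg_right)
        ((hσ (j + 1) (by omega)).mul_left 2)) (hσ j (by omega))
  have hsum' : ∑ j ∈ Finset.range m, D ((j : ℕ) : ZMod m) = 0 := by
    rw [← sum_zmod]; exact hsum
  have hA' : A m D = ∑ j ∈ Finset.range m, (j : ℤ) * D ((j : ℕ) : ZMod m) := by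
    rw [A, sum_zmod (g := fun v => ((v.val : ℤ) * D v))]
    refine Finset.sum_congr rfl fun j hj => ?_
    rw [ZMod.val_cast_of_lt (Finset.mem_range.1 hj)]
  -- k ∣ middle part of any weighted sum
  have peel : ∀ (g : ℕ → ℤ), ∑ j ∈ Finset.range m, g j
      = (∑ j ∈ Finset.range (m - 2), g (j + 1) + g 0) + g (m - 1) := by
    intro g
    obtain ⟨M, hM⟩ : ∃ M, m = M + 2 := ⟨m - 2, by omega⟩
    rw [hM, show M + 2 - 2 = M by omega, show M + 2 - 1 = M + 1 by omega,
      show M + 2 = (M + 1) + 1 from rfl, Finset.sum_range_succ, Finset.sum_range_succ']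
  have peel1 : ∀ (g : ℕ → ℤ), ∑ j ∈ Finset.range m, g j
      = ∑ j ∈ Finset.range (m - 1), g j + g (m - 1) := by
    intro g
    obtain ⟨M, hM⟩ : ∃ M, m = M + 1 := ⟨m - 1, by omega⟩
    rw [hM, show M + 1 - 1 = M by omega, Finset.sum_range_succ]
  have hmid1 : (k : ℤ) ∣ ∑ j ∈ Finset.range (m - 2), D (((j + 1 : ℕ)) : ZMod m) :=
    Finset.dvd_sum fun j hj => hmid (j + 1) (by omega) (by have := Finset.mem_range.1 hj; omega)
  have hpeel : ∑ j ∈ Finset.range m, D ((j : ℕ) : ZMod m)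
      = (∑ j ∈ Finset.range (m - 2), D (((j + 1 : ℕ)) : ZMod m) + D ((0 : ℕ) : ZMod m))
        + D (((m - 1 : ℕ)) : ZMod m) := peel (fun j => D ((j : ℕ) : ZMod m))
  have hS0m : (k : ℤ) ∣ D ((0 : ℕ) : ZMod m) + D (((m - 1 : ℕ)) : ZMod m) := by
    have h1 : D ((0 : ℕ) : ZMod m) + D (((m - 1 : ℕ)) : ZMod m)
        = (∑ j ∈ Finset.range m, D ((j : ℕ) : ZMod m))
          - ∑ j ∈ Finset.range (m - 2), D (((j + 1 : ℕ)) : ZMod m) := by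
      rw [hpeel]; ring
    rw [h1, hsum']
    exact dvd_sub (dvd_zero _) hmid1
  have hApeel : A m D = (∑ j ∈ Finset.range (m - 2), ((j + 1 : ℕ) : ℤ) * D (((j + 1 : ℕ)) : ZMod m)
        + ((0 : ℕ) : ℤ) * D ((0 : ℕ) : ZMod m)) + ((m - 1 : ℕ) : ℤ) * D (((m - 1 : ℕ)) : ZMod m) := by
    rw [hA']
    exact peel (fun j => ((j : ℕ) : ℤ) * D ((j : ℕ) : ZMod m))
  have hAmid : (k : ℤ) ∣ ∑ j ∈ Finset.range (m - 2), ((j + 1 : ℕ) : ℤ) * D (((j + 1 : ℕ)) : ZMod m) :=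
    Finset.dvd_sum fun j hj =>
      (hmid (j + 1) (by omega) (by have := Finset.mem_range.1 hj; omega)).mul_left _
  have hkA : (k : ℤ) ∣ A m D + m * D 0 := dvd_trans ⟨(m : ℤ), by ring⟩ hlast
  have hX : (k : ℤ) ∣ ((m - 1 : ℕ) : ℤ) * D (((m - 1 : ℕ)) : ZMod m) + m * D 0 := by
    have h1 : ((m - 1 : ℕ) : ℤ) * D (((m - 1 : ℕ)) : ZMod m) + m * D 0
        = (A m D + m * D 0)
          - (∑ j ∈ Finset.range (m - 2), ((j + 1 : ℕ) : ℤ) * D (((j + 1 : ℕ)) : ZMod m)) := by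
      rw [hApeel]; push_cast; ring
    rw [h1]
    exact dvd_sub hkA hAmid
  have hk0 : (k : ℤ) ∣ D 0 := by
    have h1 : D 0 = (((m - 1 : ℕ) : ℤ) * D (((m - 1 : ℕ)) : ZMod m) + m * D 0)
        - ((m - 1 : ℕ) : ℤ) * (D ((0 : ℕ) : ZMod m) + D (((m - 1 : ℕ)) : ZMod m)) := by
      have e1 : ((m - 1 : ℕ) : ℤ) = (m : ℤ) - 1 := by omega
      rw [e1]
      push_cast
      ring
    rw [h1]
    exact dvd_sub hX (hS0m.mul_left _)
  have hkm1 : (k : ℤ) ∣ D (((m - 1 : ℕ)) : ZMod m) := by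
    have h1 : D (((m - 1 : ℕ)) : ZMod m)
        = (D ((0 : ℕ) : ZMod m) + D (((m - 1 : ℕ)) : ZMod m)) - D 0 := by
      push_cast
      ring
    rw [h1]
    exact dvd_sub hS0m hk0
  have hall : ∀ v : ZMod m, (k : ℤ) ∣ D v := by
    intro v
    have hv : ((v.val : ℕ) : ZMod m) = v := ZMod.natCast_rightInverse v
    have hvlt := ZMod.val_lt v
    by_cases h : v.val = 0
    · rw [← hv, h]
      simpa using hk0
    · by_cases h' : v.val = m - 1
      · rw [← hv, h']
        exact hkm1
      · rw [← hv]
        exact hmid v.val (by omega) (by omega)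
  set D' : ZMod m → ℤ := fun v => D v / k with hD'def
  have hD' : ∀ v, D v = k * D' v := fun v => (Int.mul_ediv_cancel' (hall v)).symm
  have hsum'' : ∑ j ∈ Finset.range m, D' ((j : ℕ) : ZMod m) = 0 := by
    have h1 : (k : ℤ) * ∑ j ∈ Finset.range m, D' ((j : ℕ) : ZMod m) = 0 := by
      rw [Finset.mul_sum]
      rw [Finset.sum_congr rfl fun j _ => (hD' _).symm]
      exact hsum'
    exact (mul_eq_zero.1 h1).resolve_left hkz
  have hAD'm : (m : ℤ) ∣ ∑ j ∈ Finset.range m, (j : ℤ) * D' ((j : ℕ) : ZMod m) := by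
    have hrw : A m D + m * D 0
        = (k : ℤ) * ((∑ j ∈ Finset.range m, (j : ℤ) * D' ((j : ℕ) : ZMod m)) + m * D' 0) := by
      calc A m D + (m : ℤ) * D 0
          = ∑ j ∈ Finset.range m, (j : ℤ) * D ((j : ℕ) : ZMod m) + m * D 0 := by rw [hA']
        _ = ∑ j ∈ Finset.range m, (k : ℤ) * ((j : ℤ) * D' ((j : ℕ) : ZMod m))
            + (k : ℤ) * ((m : ℤ) * D' 0) := by
            refine congrArg₂ (· + ·) (Finset.sum_congr rfl fun j _ => by rw [hD' _]; ring) ?_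
            rw [hD' 0]; ring
        _ = (k : ℤ) * ((∑ j ∈ Finset.range m, (j : ℤ) * D' ((j : ℕ) : ZMod m)) + m * D' 0) := by
            rw [mul_add, Finset.mul_sum]
    have h2 : ((k : ℤ) * m) ∣ (k : ℤ) * ((∑ j ∈ Finset.range m, (j : ℤ) * D' ((j : ℕ) : ZMod m))
        + m * D' 0) := hrw ▸ hlast
    have h3 := (mul_dvd_mul_iff_left hkz).1 h2
    have h4 : (∑ j ∈ Finset.range m, (j : ℤ) * D' ((j : ℕ) : ZMod m))
        = ((∑ j ∈ Finset.range m, (j : ℤ) * D' ((j : ℕ) : ZMod m)) + m * D' 0) - m * D' 0 := by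
      ring
    rw [h4]
    exact dvd_sub h3 (dvd_mul_right _ _)
  -- partial sums
  set c' : ℕ → ℤ := fun j => ∑ t ∈ Finset.range (j + 1), D' ((t : ℕ) : ZMod m) with hc'def
  have hc'top : c' (m - 1) = 0 := by
    have : (m - 1) + 1 = m := by omega
    rw [hc'def]
    simp only [this]
    exact hsum''
  have hexch : ∀ N : ℕ, ∑ j ∈ Finset.range N, c' j
      = ∑ t ∈ Finset.range N, ((N - t : ℕ) : ℤ) * D' ((t : ℕ) : ZMod m) := by
    intro N
    induction N with
    | zero => simp
    | succ N ih =>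
      rw [Finset.sum_range_succ, ih, hc'def]
      have h1 : ∑ t ∈ Finset.range (N + 1), ((N + 1 - t : ℕ) : ℤ) * D' ((t : ℕ) : ZMod m)
          = ∑ t ∈ Finset.range (N + 1), (((N - t : ℕ) : ℤ) * D' ((t : ℕ) : ZMod m)
            + D' ((t : ℕ) : ZMod m)) := by
        refine Finset.sum_congr rfl fun t ht => ?_
        have ht' := Finset.mem_range.1 ht
        have : ((N + 1 - t : ℕ) : ℤ) = ((N - t : ℕ) : ℤ) + 1 := by omega
        rw [this]
        ring
      rw [h1, Finset.sum_add_distrib]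
      congr 1
      rw [Finset.sum_range_succ, Nat.sub_self]
      simp
  have hTot : (m : ℤ) ∣ ∑ j ∈ Finset.range m, c' j := by
    rw [hexch m]
    have h1 : ∑ t ∈ Finset.range m, ((m - t : ℕ) : ℤ) * D' ((t : ℕ) : ZMod m)
        = ∑ t ∈ Finset.range m, ((m : ℤ) * D' ((t : ℕ) : ZMod m)
          - (t : ℤ) * D' ((t : ℕ) : ZMod m)) := by
      refine Finset.sum_congr rfl fun t ht => ?_
      have ht' := Finset.mem_range.1 ht
      have : ((m - t : ℕ) : ℤ) = (m : ℤ) - t := by omega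
      rw [this]
      ring
    rw [h1, Finset.sum_sub_distrib, ← Finset.mul_sum, hsum'', mul_zero, zero_sub]
    exact (hAD'm).neg_right
  set C : ℤ := -((∑ j ∈ Finset.range m, c' j) / m) with hCdef
  have hmC : (m : ℤ) * C = -(∑ j ∈ Finset.range m, c' j) := by
    rw [hCdef, mul_neg, Int.mul_ediv_cancel' hTot]
  set H : ZMod m → ℤ := fun v => c' v.val + C with hHdef
  set f : ZMod m → ℤ := fun v => -∑ t ∈ Finset.range v.val, H ((t : ℕ) : ZMod m) with hfdef
  have hHtot : ∑ t ∈ Finset.range m, H ((t : ℕ) : ZMod m) = 0 := by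
    have h1 : ∑ t ∈ Finset.range m, H ((t : ℕ) : ZMod m)
        = ∑ t ∈ Finset.range m, (c' t + C) := by
      refine Finset.sum_congr rfl fun t ht => ?_
      rw [hHdef]
      simp only [ZMod.val_cast_of_lt (Finset.mem_range.1 ht)]
    rw [h1, Finset.sum_add_distrib, Finset.sum_const, Finset.card_range, nsmul_eq_mul]
    rw [hmC]
    ring
  have claim1 : ∀ v : ZMod m, f v - f (v + 1) = H v := by
    intro v
    have hfv1 : f (v + 1) = -∑ t ∈ Finset.range ((v + 1).val), H ((t : ℕ) : ZMod m) := rfl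
    have hvv : ((v.val : ℕ) : ZMod m) = v := ZMod.natCast_rightInverse v
    by_cases h : v.val + 1 = m
    · rw [hfv1, val_add_one hm, if_pos h]
      have h2 : ∑ t ∈ Finset.range (m - 1), H ((t : ℕ) : ZMod m)
          = -H (((m - 1 : ℕ)) : ZMod m) := by
        have h3 := hHtot
        rw [peel1 (fun t => H ((t : ℕ) : ZMod m))] at h3
        linarith
      have h4 : f v = -∑ t ∈ Finset.range (m - 1), H ((t : ℕ) : ZMod m) := by
        rw [hfdef]
        simp only []
        rw [show v.val = m - 1 by omega]
      rw [h4, h2]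
      have h5 : v = (((m - 1 : ℕ)) : ZMod m) := by
        rw [← hvv, show v.val = m - 1 by omega]
      rw [← h5]
      simp
    · rw [hfv1, val_add_one hm, if_neg h, Finset.sum_range_succ, hvv]
      have : f v = -∑ t ∈ Finset.range v.val, H ((t : ℕ) : ZMod m) := rfl
      rw [this]
      ring
  have claim2 : ∀ v : ZMod m, H (v + 1) - H v = D' (v + 1) := by
    intro v
    have hvv : ((v.val : ℕ) : ZMod m) = v := ZMod.natCast_rightInverse v
    by_cases h : v.val + 1 = m
    · have hv1 : v + 1 = 0 := by
        rw [← hvv]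
        rw [← Nat.cast_one, ← Nat.cast_add, h, ZMod.natCast_self]
      rw [hv1]
      have hH0 : H 0 = c' 0 + C := by rw [hHdef]; simp only [ZMod.val_zero]
      have hHv : H v = c' (m - 1) + C := by
        rw [hHdef]
        simp only [show v.val = m - 1 by omega]
      rw [hH0, hHv, hc'top]
      have hc'0 : c' 0 = D' ((0 : ℕ) : ZMod m) := by
        rw [hc'def]
        simp
      rw [hc'0]
      push_cast
      ring
    · have hv1val : (v + 1).val = v.val + 1 := by rw [val_add_one hm, if_neg h]
      have hH1 : H (v + 1) = c' (v.val + 1) + C := by rw [hHdef]; simp only [hv1val]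
      have hHv : H v = c' v.val + C := rfl
      have hc'succ : c' (v.val + 1) = c' v.val + D' (((v.val + 1 : ℕ)) : ZMod m) := by
        rw [hc'def]
        simp only []
        rw [show v.val + 1 + 1 = (v.val + 1) + 1 from rfl, Finset.sum_range_succ]
      have hcast : (((v.val + 1 : ℕ)) : ZMod m) = v + 1 := by
        push_cast
        rw [hvv]
      rw [hH1, hHv, hc'succ, hcast]
      ring
  refine ⟨f, funext fun v => ?_⟩
  rw [L_apply]
  have h1 := claim1 v
  have h2 := claim1 (v - 1)
  have h3 := claim2 (v - 1)
  rw [sub_add_cancel] at h2 h3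
  have h4 : 2 * f v - f (v - 1) - f (v + 1) = (f v - f (v + 1)) - (f (v - 1) - f v) := by ring
  rw [h4, h1, h2, h3, ← hD' v]


noncomputable def eD (m : ℕ) (q : ℕ) : ZMod m → ℤ := fun v => if v = ((q : ℕ) : ZMod m) then 1 else 0

lemma sum_eD [NeZero m] (q : ℕ) : ∑ v : ZMod m, eD m q v = 1 := by
  simp [eD, Finset.sum_ite_eq']

lemma S_eD [NeZero m] (q j : ℕ) (hq : q < m) (hj : j < m) :
    S m (eD m q) j = if q ≤ j then ((j : ℤ) + 1 - q) else 0 := by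
  unfold S eD
  have hcond : ∀ t, t ∈ Finset.range (j + 1) → ((((t : ℕ) : ZMod m) = ((q : ℕ) : ZMod m)) ↔ t = q) := by
    intro t ht
    constructor
    · intro h
      have h2 := congrArg ZMod.val h
      have ht' : t < m := lt_of_lt_of_le (Finset.mem_range.1 ht) (by omega)
      rwa [ZMod.val_cast_of_lt ht', ZMod.val_cast_of_lt hq] at h2
    · rintro rfl; rfl
  calc ∑ t ∈ Finset.range (j + 1), ((j : ℤ) + 1 - t) * (if ((t : ℕ) : ZMod m) = ((q : ℕ) : ZMod m) then 1 else 0)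
      = ∑ t ∈ Finset.range (j + 1), (if t = q then ((j : ℤ) + 1 - t) else 0) := by
        refine Finset.sum_congr rfl fun t ht => ?_
        by_cases h : t = q
        · rw [if_pos ((hcond t ht).2 h), if_pos h]; ring
        · rw [if_neg (fun hh => h ((hcond t ht).1 hh)), if_neg h]; ring
    _ = if q ∈ Finset.range (j + 1) then ((j : ℤ) + 1 - q) else 0 := by
        rw [Finset.sum_ite_eq']
    _ = if q ≤ j then ((j : ℤ) + 1 - q) else 0 := by
        congr 1
        simp [Finset.mem_range, Nat.lt_succ_iff]

lemma A_eD [NeZero m] (q : ℕ) (hq : q < m) : A m (eD m q) = q := by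
  unfold A eD
  calc ∑ v : ZMod m, (v.val : ℤ) * (if v = ((q : ℕ) : ZMod m) then 1 else 0)
      = ∑ v : ZMod m, (if v = ((q : ℕ) : ZMod m) then (v.val : ℤ) else 0) := by
        refine Finset.sum_congr rfl fun v _ => ?_
        by_cases h : v = ((q : ℕ) : ZMod m) <;> simp [h]
    _ = ((((q : ℕ) : ZMod m)).val : ℤ) := by rw [Finset.sum_ite_eq']; simp
    _ = q := by rw [ZMod.val_cast_of_lt hq]

lemma eD_at_zero [NeZero m] (q : ℕ) (h1 : 1 ≤ q) (h2 : q < m) : eD m q 0 = 0 := by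
  unfold eD
  rw [if_neg]
  intro h
  have h3 := congrArg ZMod.val h
  rw [ZMod.val_zero, ZMod.val_cast_of_lt h2] at h3
  omega

lemma eD_at_zero' [NeZero m] : eD m 0 0 = 1 := by
  unfold eD
  rw [if_pos (by simp)]

noncomputable def Bq (m q : ℕ) : ZMod m → ℤ := fun v => eD m q v - eD m (q + 1) v
noncomputable def Dl (m : ℕ) : ZMod m → ℤ := fun v => eD m 0 v - eD m (m - 1) v

lemma S_sub [NeZero m] (P Q : ZMod m → ℤ) (j : ℕ) :
    S m (fun v => P v - Q v) j = S m P j - S m Q j := by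
  simp [S, mul_sub, Finset.sum_sub_distrib]

lemma A_sub [NeZero m] (P Q : ZMod m → ℤ) :
    A m (fun v => P v - Q v) = A m P - A m Q := by
  simp [A, mul_sub, Finset.sum_sub_distrib]

lemma FF_Bq [NeZero m] (hm : 2 ≤ m) (q : ℕ) (h1 : 1 ≤ q) (h2 : q ≤ m - 2) :
    FF m k (Bq m q) = (fun j => ((-(if q ≤ j.val + 1 then 1 else 0) : ℤ) : ZMod k),
      ((-1 : ℤ) : ZMod (k * m))) := by
  have hq : q < m := by omega
  have hq1 : q + 1 < m := by omega
  rw [FF_apply]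
  refine Prod.ext ?_ ?_
  · funext j
    show ((((j.val : ℤ) + 2) * Bq m q 0 - S m (Bq m q) (j.val + 1) : ℤ) : ZMod k) = _
    have hj : j.val + 1 < m := by have := j.isLt; omega
    congr 1
    unfold Bq
    rw [S_sub, S_eD q (j.val + 1) hq hj, S_eD (q + 1) (j.val + 1) hq1 hj,
      eD_at_zero q h1 hq, eD_at_zero (q + 1) (by omega) hq1]
    by_cases hqr : q ≤ j.val + 1
    · by_cases hq1r : q + 1 ≤ j.val + 1
      · rw [if_pos hqr, if_pos hq1r, if_pos hqr]; push_cast; ring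
      · rw [if_pos hqr, if_neg hq1r, if_pos hqr]
        have : q = j.val + 1 := by omega
        subst this
        push_cast; ring
    · rw [if_neg hqr, if_neg (by omega), if_neg hqr]; ring
  · show ((A m (Bq m q) + (m : ℤ) * Bq m q 0 : ℤ) : ZMod (k * m)) = _
    congr 1
    unfold Bq
    rw [A_sub, A_eD q hq, A_eD (q + 1) hq1, eD_at_zero q h1 hq, eD_at_zero (q + 1) (by omega) hq1]
    push_cast; ring

lemma FF_Dl [NeZero m] (hm : 2 ≤ m) :
    FF m k (Dl m) = (fun j => ((0 : ℤ) : ZMod k), ((1 : ℤ) : ZMod (k * m))) := by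
  have hm1 : m - 1 < m := by omega
  rw [FF_apply]
  refine Prod.ext ?_ ?_
  · funext j
    show ((((j.val : ℤ) + 2) * Dl m 0 - S m (Dl m) (j.val + 1) : ℤ) : ZMod k) = _
    have hj : j.val + 1 < m := by have := j.isLt; omega
    have hj2 : ¬ (m - 1 ≤ j.val + 1) := by have := j.isLt; omega
    congr 1
    unfold Dl
    rw [S_sub, S_eD 0 (j.val + 1) (by omega) hj, S_eD (m - 1) (j.val + 1) hm1 hj,
      eD_at_zero (m - 1) (by omega) hm1, eD_at_zero']
    rw [if_pos (by omega : 0 ≤ j.val + 1), if_neg hj2]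
    push_cast; ring
  · show ((A m (Dl m) + (m : ℤ) * Dl m 0 : ℤ) : ZMod (k * m)) = _
    congr 1
    unfold Dl
    rw [A_sub, A_eD 0 (by omega), A_eD (m - 1) hm1,
      eD_at_zero (m - 1) (by omega) hm1, eD_at_zero']
    have : ((m - 1 : ℕ) : ℤ) = (m : ℤ) - 1 := by omega
    rw [this]
    push_cast; ring

lemma surj [NeZero m] (hm : 2 ≤ m) (hk : 1 ≤ k) (y : (Fin (m - 2) → ZMod k) × ZMod (k * m)) :
    ∃ D : ZMod m → ℤ, (∑ v : ZMod m, D v = 0) ∧ FF m k D = y := by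
  haveI : NeZero k := ⟨by omega⟩
  haveI : NeZero (k * m) := ⟨Nat.mul_ne_zero (by omega) (NeZero.ne m)⟩
  obtain ⟨g, t⟩ := y
  set G : ℕ → ℤ := fun r => if h : 1 ≤ r ∧ r ≤ m - 2 then ((g ⟨r - 1, by omega⟩).val : ℤ) else 0
    with hGdef
  set b : ℤ := (t.val : ℤ) - G (m - 2) with hbdef
  refine ⟨(∑ q ∈ Finset.range (m - 2), (G q - G (q + 1)) • Bq m (q + 1)) + b • Dl m, ?_, ?_⟩
  · have h1 : ∀ q : ℕ, ∑ v : ZMod m, Bq m q v = 0 := by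
      intro q
      unfold Bq
      rw [Finset.sum_sub_distrib, sum_eD, sum_eD, sub_self]
    have h2 : ∑ v : ZMod m, Dl m v = 0 := by
      unfold Dl
      rw [Finset.sum_sub_distrib, sum_eD, sum_eD, sub_self]
    simp only [Pi.add_apply, Finset.sum_apply, Pi.smul_apply, smul_eq_mul]
    rw [Finset.sum_add_distrib, Finset.sum_comm]
    rw [Finset.sum_congr rfl fun q _ => (Finset.mul_sum _ _ _).symm]
    rw [Finset.sum_congr rfl (fun q (_ : q ∈ Finset.range (m - 2)) => by rw [h1 (q + 1), mul_zero])]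
    rw [← Finset.mul_sum, h2]
    simp
  · rw [map_add, map_sum, map_zsmul]
    rw [Finset.sum_congr rfl (fun q hq => by
      rw [map_zsmul, FF_Bq hm (q + 1) (by omega) (by have := Finset.mem_range.1 hq; omega)])]
    rw [FF_Dl hm]
    refine Prod.ext ?_ ?_
    · funext j
      have hjlt : j.val < m - 2 := j.isLt
      rw [Prod.fst_add, Prod.smul_fst, Prod.fst_sum]
      simp only [Prod.smul_fst, Pi.add_apply, Finset.sum_apply, Pi.smul_apply]
      have hterm : ∀ q ∈ Finset.range (m - 2),
          (G q - G (q + 1)) • ((-(if q + 1 ≤ j.val + 1 then 1 else 0) : ℤ) : ZMod k)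
          = (((G q - G (q + 1)) * (-(if q + 1 ≤ j.val + 1 then 1 else 0)) : ℤ) : ZMod k) := by
        intro q _
        rw [zsmul_eq_mul]
        push_cast
        ring
      rw [Finset.sum_congr rfl hterm, ← Int.cast_sum]
      have hz : b • ((0 : ℤ) : ZMod k) = 0 := by simp
      rw [hz, add_zero]
      have hsum2 : ∑ q ∈ Finset.range (m - 2), ((G q - G (q + 1)) * (-(if q + 1 ≤ j.val + 1 then 1 else 0)) : ℤ)
          = ∑ q ∈ Finset.range (j.val + 1), (G (q + 1) - G q) := by
        rw [← Finset.sum_subset (Finset.range_subset_range.2 (by omega : j.val + 1 ≤ m - 2))]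
        · refine Finset.sum_congr rfl fun q hq => ?_
          have hq' := Finset.mem_range.1 hq
          rw [if_pos (by omega)]
          ring
        · intro q hq hnq
          have h2 : ¬ (q < j.val + 1) := fun hh => hnq (Finset.mem_range.2 hh)
          rw [if_neg (by omega)]
          ring
      rw [hsum2, Finset.sum_range_sub]
      have hG0 : G 0 = 0 := by rw [hGdef]; norm_num
      have hGj : G (j.val + 1) = ((g j).val : ℤ) := by
        rw [hGdef]
        have hcond : 1 ≤ j.val + 1 ∧ j.val + 1 ≤ m - 2 := ⟨by omega, by omega⟩
        simp only [dif_pos hcond]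
        congr 1
      rw [hG0, hGj, sub_zero]
      rw [Int.cast_natCast]
      exact ZMod.natCast_rightInverse _
    · rw [Prod.snd_add, Prod.smul_snd, Prod.snd_sum]
      simp only [Prod.smul_snd]
      have hterm : ∀ q ∈ Finset.range (m - 2),
          (G q - G (q + 1)) • ((-1 : ℤ) : ZMod (k * m))
          = (((G q - G (q + 1)) * (-1) : ℤ) : ZMod (k * m)) := by
        intro q _
        rw [zsmul_eq_mul]
        push_cast
        ring
      rw [Finset.sum_congr rfl hterm, ← Int.cast_sum]
      have hsum2 : ∑ q ∈ Finset.range (m - 2), ((G q - G (q + 1)) * (-1) : ℤ)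
          = ∑ q ∈ Finset.range (m - 2), (G (q + 1) - G q) := by
        refine Finset.sum_congr rfl fun q _ => by ring
      rw [hsum2, Finset.sum_range_sub]
      have hG0 : G 0 = 0 := by rw [hGdef]; norm_num
      rw [hG0, sub_zero]
      have hb : b • ((1 : ℤ) : ZMod (k * m)) = ((b : ℤ) : ZMod (k * m)) := by
        rw [zsmul_eq_mul]
        push_cast
        ring
      rw [hb, ← Int.cast_add, hbdef]
      have : G (m - 2) + ((t.val : ℤ) - G (m - 2)) = (t.val : ℤ) := by ring
      rw [this]
      rw [Int.cast_natCast]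
      exact ZMod.natCast_rightInverse _

lemma key_cast (p C N : ℕ) [NeZero N] (x : ZMod N) :
    (p : ℤ) ^ C • x = ((p ^ C * x.val : ℕ) : ZMod N) := by
  rw [zsmul_eq_mul]
  push_cast
  rw [ZMod.natCast_rightInverse x]

lemma key_iff (p C N : ℕ) [NeZero N] (x : ZMod N) :
    (p : ℤ) ^ C • x = 0 ↔ N ∣ p ^ C * x.val := by
  rw [key_cast, ZMod.natCast_eq_zero_iff]

lemma fac_split (p N : ℕ) (hp : p.Prime) (hN : N ≠ 0) :
    p ^ padicValNat p N * (N / p ^ padicValNat p N) = N ∧ ¬ p ∣ (N / p ^ padicValNat p N) := by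
  constructor
  · have h := Nat.ordProj_mul_ordCompl_eq_self N p
    rwa [Nat.factorization_def N hp] at h
  · have h := Nat.not_dvd_ordCompl hp hN
    rwa [Nat.factorization_def N hp] at h

lemma zmod_tors_mono (p C N : ℕ) (hp : p.Prime) (hN : N ≠ 0)
    (hC : padicValNat p N ≤ C) (x : ZMod N) (j : ℕ) (h : (p : ℤ) ^ j • x = 0) :
    (p : ℤ) ^ C • x = 0 := by
  haveI : NeZero N := ⟨hN⟩
  obtain ⟨hfac, hnd⟩ := fac_split p N hp hN
  set v := padicValNat p N
  set N' := N / p ^ v with hN'def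
  rw [key_iff] at h ⊢
  have h2 : N' ∣ p ^ j * x.val := dvd_trans (Dvd.intro_left _ hfac) h
  have hcop : Nat.Coprime N' (p ^ j) :=
    Nat.Coprime.pow_right j (((Nat.Prime.coprime_iff_not_dvd hp).2 hnd).symm)
  have h3 : N' ∣ x.val := hcop.dvd_of_dvd_mul_left h2
  calc N = p ^ v * N' := hfac.symm
    _ ∣ p ^ C * x.val := mul_dvd_mul (pow_dvd_pow p hC) h3

lemma card_ptors (p C N : ℕ) (hp : p.Prime) (hN : N ≠ 0)
    (hC : padicValNat p N ≤ C) :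
    Nat.card {x : ZMod N // (p : ℤ) ^ C • x = 0} = p ^ padicValNat p N := by
  haveI : NeZero N := ⟨hN⟩
  obtain ⟨hfac, hnd⟩ := fac_split p N hp hN
  set v := padicValNat p N
  set N' := N / p ^ v with hN'def
  have hN'pos : 0 < N' := by
    rcases Nat.eq_zero_or_pos N' with h | h
    · rw [h, mul_zero] at hfac; omega
    · exact h
  have hlt : ∀ y : Fin (p ^ v), N' * y.val < N := by
    intro y
    calc N' * y.val < N' * p ^ v := (Nat.mul_lt_mul_left hN'pos).mpr y.isLt
      _ = N := by rw [mul_comm]; exact hfac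
  let f : Fin (p ^ v) → {x : ZMod N // (p : ℤ) ^ C • x = 0} := fun y =>
    ⟨((N' * y.val : ℕ) : ZMod N), by
      rw [key_iff]
      have hval : (((N' * y.val : ℕ) : ZMod N)).val = N' * y.val := ZMod.val_cast_of_lt (hlt y)
      rw [hval, ← hfac]
      exact mul_dvd_mul (pow_dvd_pow p hC) (dvd_mul_right _ _)⟩
  have hbij : Function.Bijective f := by
    constructor
    · intro y1 y2 hy
      have h1 := congrArg (fun z => (z : {x : ZMod N // (p : ℤ) ^ C • x = 0}).val.val) hy
      simp only [f] at h1
      rw [ZMod.val_cast_of_lt (hlt y1), ZMod.val_cast_of_lt (hlt y2)] at h1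
      exact Fin.ext (Nat.eq_of_mul_eq_mul_left hN'pos h1)
    · rintro ⟨x, hx⟩
      rw [key_iff] at hx
      have h2 : N' ∣ p ^ C * x.val := dvd_trans (Dvd.intro_left _ hfac) hx
      have hcop : Nat.Coprime N' (p ^ C) :=
        Nat.Coprime.pow_right C (((Nat.Prime.coprime_iff_not_dvd hp).2 hnd).symm)
      have h3 : N' ∣ x.val := hcop.dvd_of_dvd_mul_left h2
      have hy : N' * (x.val / N') = x.val := Nat.mul_div_cancel' h3
      have hylt : x.val / N' < p ^ v := by
        have h4 : x.val < N := ZMod.val_lt x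
        have h5 : N' * (x.val / N') < N' * p ^ v := by
          rw [hy, mul_comm N' (p ^ v), hfac]
          exact h4
        exact lt_of_mul_lt_mul_left h5 (Nat.zero_le _)
      refine ⟨⟨x.val / N', hylt⟩, ?_⟩
      apply Subtype.ext
      show ((N' * (x.val / N') : ℕ) : ZMod N) = x
      rw [hy]
      exact ZMod.natCast_rightInverse x
  rw [← Nat.card_eq_of_bijective f hbij, Nat.card_eq_fintype_card, Fintype.card_fin]

end JP

/-- For the `ℤ_p`-tower over the bouquet `B_k` (all voltages `γ`), whose layer `X_n` is the
thickened `pⁿ`-cycle with `k` parallel edges between consecutive vertices, and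
`u = v_p(k)`: for all `n ≥ u`, the `p`-primary part of the Jacobian of `X_n` has size
`p^{u·pⁿ + n − u}`; in particular it has the Iwasawa-type form `p^{λpⁿ + μn + ν}` with
`λ = u`, `μ = 1`, `ν = −u`. -/
theorem jacobian_p_part_asymptotics (p n k : ℕ) (hp : p.Prime) (hk : 1 ≤ k)
    (hn : padicValNat p k ≤ n) :
    haveI : NeZero (p ^ n) := ⟨pow_ne_zero n hp.ne_zero⟩
    Nat.card {x : Jacobian (fun e : ZMod (p ^ n) × Fin k => e.1) (fun e => e.1 + 1) //
        ∃ m : ℕ, (p : ℤ) ^ m • x = 0} =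
      p ^ (padicValNat p k * p ^ n + n - padicValNat p k) := by
  haveI : NeZero (p ^ n) := ⟨pow_ne_zero n hp.ne_zero⟩
  haveI : NeZero k := ⟨by omega⟩
  haveI : NeZero (k * p ^ n) := ⟨Nat.mul_ne_zero (by omega) (pow_ne_zero n hp.ne_zero)⟩
  haveI : Fact p.Prime := ⟨hp⟩
  rcases Nat.eq_zero_or_pos n with rfl | hn1
  · -- n = 0 : the graph has one vertex and the Jacobian is trivial
    have hu0 : padicValNat p k = 0 := Nat.le_zero.1 hn
    haveI hsubV : Subsingleton (ZMod (p ^ 0)) := by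
      have h1 : Fintype.card (ZMod (p ^ 0)) = 1 := by rw [ZMod.card, pow_zero]
      exact Fintype.card_le_one_iff_subsingleton.mp (le_of_eq h1)
    haveI hsubK : Subsingleton (↥(LinearMap.ker (degMap (ZMod (p ^ 0))))) := by
      constructor
      intro a b
      apply Subtype.ext
      funext v
      have ha : ∑ w : ZMod (p ^ 0), a.val w = 0 := a.2
      have hb : ∑ w : ZMod (p ^ 0), b.val w = 0 := b.2
      rw [Fintype.sum_subsingleton _ v] at ha hb
      rw [ha, hb]
    haveI : Subsingleton (Jacobian (fun e : ZMod (p ^ 0) × Fin k => e.1) (fun e => e.1 + 1)) :=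
      (Submodule.Quotient.mk_surjective _).subsingleton
    haveI := uniqueOfSubsingleton
      (⟨0, 0, smul_zero _⟩ : {x : Jacobian (fun e : ZMod (p ^ 0) × Fin k => e.1)
        (fun e => e.1 + 1) // ∃ m : ℕ, (p : ℤ) ^ m • x = 0})
    rw [Nat.card_unique, hu0]
    norm_num
  · -- main case
    set m := p ^ n with hmdef
    have hm : 2 ≤ m := le_trans hp.two_le (Nat.le_self_pow (by omega) p)
    set u := padicValNat p k with hudef
    set C := u + n with hCdef
    have hvkm : padicValNat p (k * m) = u + n := by
      rw [hmdef, padicValNat.mul (by omega) (pow_ne_zero n hp.ne_zero), padicValNat.prime_pow]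
    have hvkC : padicValNat p k ≤ C := by omega
    have hvkmC : padicValNat p (k * m) ≤ C := by omega
    -- the linear map from degree-zero divisors
    set F' : ↥(LinearMap.ker (degMap (ZMod m))) →ₗ[ℤ]
        (Fin (m - 2) → ZMod k) × ZMod (k * m) :=
      (JP.FF m k).toIntLinearMap ∘ₗ (LinearMap.ker (degMap (ZMod m))).subtype with hF'def
    have hker : LinearMap.ker F' = Submodule.comap (LinearMap.ker (degMap (ZMod m))).subtype
        (LinearMap.range (bd (fun e : ZMod m × Fin k => e.1) (fun e => e.1 + 1) ∘ₗ
          starMap (fun e : ZMod m × Fin k => e.1) (fun e => e.1 + 1))) := by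
      ext x
      simp only [LinearMap.mem_ker, Submodule.mem_comap, LinearMap.mem_range]
      constructor
      · intro hx
        have hx0 : ∑ v : ZMod m, x.val v = 0 := x.2
        obtain ⟨f, hf⟩ := JP.ker_L hm hk x.val hx0 hx
        exact ⟨f, hf⟩
      · rintro ⟨f, hf⟩
        show JP.FF m k x.val = 0
        have hf2 : (x.val : ZMod m → ℤ) = JP.Lmap m k f := hf.symm
        rw [hf2]
        exact JP.FL_zero hm f
    have hsurj : Function.Surjective F' := by
      intro y
      obtain ⟨D, hD0, hDy⟩ := JP.surj hm hk y
      exact ⟨⟨D, hD0⟩, hDy⟩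
    let e : Jacobian (fun e : ZMod m × Fin k => e.1) (fun e => e.1 + 1) ≃ₗ[ℤ]
        (Fin (m - 2) → ZMod k) × ZMod (k * m) :=
      (Submodule.quotEquivOfEq _ _ hker.symm) ≪≫ₗ (F'.quotKerEquivOfSurjective hsurj)
    -- transfer the torsion subtype along e
    have e1 : {x : Jacobian (fun e : ZMod m × Fin k => e.1) (fun e => e.1 + 1) //
        ∃ j : ℕ, (p : ℤ) ^ j • x = 0}
        ≃ {y : (Fin (m - 2) → ZMod k) × ZMod (k * m) // ∃ j : ℕ, (p : ℤ) ^ j • y = 0} :=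
      Equiv.subtypeEquiv e.toEquiv (fun x => by
        show (∃ j : ℕ, (p : ℤ) ^ j • x = 0) ↔ ∃ j : ℕ, (p : ℤ) ^ j • (e x) = 0
        exact exists_congr fun j =>
          ⟨fun h => by rw [← map_smul, h, map_zero],
           fun h => e.injective (by rw [map_smul, h, map_zero])⟩)
    have hcompat : ∀ (y : (Fin (m - 2) → ZMod k) × ZMod (k * m)),
        (∃ j : ℕ, (p : ℤ) ^ j • y = 0) ↔ (p : ℤ) ^ C • y = 0 := by
      intro y
      constructor
      · rintro ⟨j, h⟩
        have h1 : (p : ℤ) ^ j • y.1 = 0 := by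
          have := congrArg Prod.fst h
          rwa [Prod.smul_fst, Prod.fst_zero] at this
        have h2 : (p : ℤ) ^ j • y.2 = 0 := by
          have := congrArg Prod.snd h
          rwa [Prod.smul_snd, Prod.snd_zero] at this
        refine Prod.ext ?_ ?_
        · rw [Prod.smul_fst, Prod.fst_zero]
          funext i
          have h1i : (p : ℤ) ^ j • y.1 i = 0 := by
            have := congrFun h1 i
            rwa [Pi.smul_apply, Pi.zero_apply] at this
          have := JP.zmod_tors_mono p C k hp (by omega) hvkC (y.1 i) j h1i
          rw [Pi.smul_apply, Pi.zero_apply]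
          exact this
        · rw [Prod.smul_snd, Prod.snd_zero]
          exact JP.zmod_tors_mono p C (k * m) hp (NeZero.ne _) hvkmC y.2 j h2
      · intro h
        exact ⟨C, h⟩
    have e2 : {y : (Fin (m - 2) → ZMod k) × ZMod (k * m) // ∃ j : ℕ, (p : ℤ) ^ j • y = 0}
        ≃ {y : (Fin (m - 2) → ZMod k) × ZMod (k * m) //
            (p : ℤ) ^ C • y.1 = 0 ∧ (p : ℤ) ^ C • y.2 = 0} :=
      Equiv.subtypeEquivRight (fun y => by
        rw [hcompat y]
        constructor
        · intro h
          constructor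
          · have := congrArg Prod.fst h
            rwa [Prod.smul_fst, Prod.fst_zero] at this
          · have := congrArg Prod.snd h
            rwa [Prod.smul_snd, Prod.snd_zero] at this
        · rintro ⟨h1, h2⟩
          refine Prod.ext ?_ ?_
          · rwa [Prod.smul_fst, Prod.fst_zero]
          · rwa [Prod.smul_snd, Prod.snd_zero])
    have e3 : {y : (Fin (m - 2) → ZMod k) × ZMod (k * m) //
            (p : ℤ) ^ C • y.1 = 0 ∧ (p : ℤ) ^ C • y.2 = 0}
        ≃ {a : Fin (m - 2) → ZMod k // (p : ℤ) ^ C • a = 0}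
          × {b : ZMod (k * m) // (p : ℤ) ^ C • b = 0} :=
      Equiv.subtypeProdEquivProd (p := fun a => (p : ℤ) ^ C • a = 0)
        (q := fun b => (p : ℤ) ^ C • b = 0)
    have e4 : {a : Fin (m - 2) → ZMod k // (p : ℤ) ^ C • a = 0}
        ≃ (Fin (m - 2) → {z : ZMod k // (p : ℤ) ^ C • z = 0}) :=
      (Equiv.subtypeEquivRight (fun a => by
        constructor
        · intro h i
          have := congrFun h i
          rwa [Pi.smul_apply, Pi.zero_apply] at this
        · intro h
          funext i
          have := h i
          rw [Pi.smul_apply, Pi.zero_apply]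
          exact this)).trans (Equiv.subtypePiEquivPi)
    calc Nat.card {x : Jacobian (fun e : ZMod m × Fin k => e.1) (fun e => e.1 + 1) //
          ∃ j : ℕ, (p : ℤ) ^ j • x = 0}
        = Nat.card ((Fin (m - 2) → {z : ZMod k // (p : ℤ) ^ C • z = 0})
            × {b : ZMod (k * m) // (p : ℤ) ^ C • b = 0}) :=
          Nat.card_congr ((e1.trans (e2.trans e3)).trans (Equiv.prodCongr e4 (Equiv.refl _)))
      _ = (Nat.card {z : ZMod k // (p : ℤ) ^ C • z = 0}) ^ (m - 2)
            * Nat.card {b : ZMod (k * m) // (p : ℤ) ^ C • b = 0} := by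
          rw [Nat.card_prod, Nat.card_pi, Finset.prod_const, Finset.card_univ, Fintype.card_fin]
      _ = (p ^ u) ^ (m - 2) * p ^ (u + n) := by
          rw [JP.card_ptors p C k hp (by omega) hvkC,
            JP.card_ptors p C (k * m) hp (NeZero.ne _) hvkmC, hvkm]
      _ = p ^ (u * p ^ n + n - u) := by
          rw [← pow_mul, ← pow_add]
          congr 1
          have key : u * (m - 2) + 2 * u = u * m := by
            rw [show u * (m - 2) + 2 * u = u * ((m - 2) + 2) by ring, show (m - 2) + 2 = m by omega]
          have hun : u ≤ n := hn
          rw [← hmdef]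
          omega
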